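/- arXiv:2402.19293 — 4 statements merged into one kernel-verified Lean document; each statement's English description precedes it below -/
import Mathlib

section
/- (General thermodynamic uncertainty relation, Theorem 1.) For every Hermitian operator G on ℂ^n ⊗ ℂ^n ⊗ ℂ^M, the expectation ⟨G⟩ = ⟨Ψ_T, G Ψ_T⟩, the no-cost baseline Q_G = Re⟨Ψ̃_0, G Ψ_T⟩, the variance Var[G] = ⟨Ψ_T, G² Ψ_T⟩ − ⟨G⟩², and the survival activity Ξ = Tr[ρ (V_0† V_0)^{−1}] − 1 satisfy (⟨G⟩ − Q_G)² ≤ Ξ · Var[G]. -/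
open Matrix Kronecker Finset

noncomputable section

/-- Tensor product of two vectors. -/
def tvec {α β : Type*} (x : α → ℂ) (y : β → ℂ) : α × β → ℂ :=
  fun q => x q.1 * y q.2

/-- Standard basis vector `f_m` of the environment `ℂ^(M+1)`. -/
def stdv (M : ℕ) (m : Fin (M + 1)) : Fin (M + 1) → ℂ :=
  fun k => if k = m then 1 else 0

variable {n M : ℕ}

/-- The final pure state `Ψ_T = ∑_{i,m} √p_i ψ_i ⊗ (V_m ψ_i) ⊗ f_m` of R+S+E. -/
def PsiT (ψ : Fin n → Fin n → ℂ) (p : Fin n → ℝ)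
    (V : Fin (M + 1) → Matrix (Fin n) (Fin n) ℂ) :
    (Fin n × Fin n) × Fin (M + 1) → ℂ :=
  ∑ i, ∑ m, ((Real.sqrt (p i) : ℂ) • tvec (tvec (ψ i) (V m *ᵥ ψ i)) (stdv M m))

/-- The unnormalized vector `Ψ̃_0 = ∑_i √p_i ψ_i ⊗ ((V_0†)⁻¹ ψ_i) ⊗ f_0`. -/
def PsiTilde0 (ψ : Fin n → Fin n → ℂ) (p : Fin n → ℝ)
    (V : Fin (M + 1) → Matrix (Fin n) (Fin n) ℂ) :
    (Fin n × Fin n) × Fin (M + 1) → ℂ :=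
  ∑ i, ((Real.sqrt (p i) : ℂ) • tvec (tvec (ψ i) ((((V 0)ᴴ)⁻¹) *ᵥ ψ i)) (stdv M 0))

/-- The initial density matrix `ρ = ∑_i p_i ψ_i ψ_i†` of the principal system S. -/
def rho (ψ : Fin n → Fin n → ℂ) (p : Fin n → ℝ) : Matrix (Fin n) (Fin n) ℂ :=
  ∑ i, ((p i : ℂ) • vecMulVec (ψ i) (star (ψ i)))

/-- Expectation value `⟨G⟩ = ⟨Ψ, G Ψ⟩` (its real part, which is all of it for Hermitian `G`). -/
def expval {ι : Type*} [Fintype ι] (G : Matrix ι ι ℂ) (Ψ : ι → ℂ) : ℝ :=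
  (star Ψ ⬝ᵥ (G *ᵥ Ψ)).re

/-- Variance `Var[G] = ⟨Ψ, G² Ψ⟩ − ⟨G⟩²`. -/
def variance {ι : Type*} [Fintype ι] (G : Matrix ι ι ℂ) (Ψ : ι → ℂ) : ℝ :=
  expval (G * G) Ψ - (expval G Ψ) ^ 2

/-- The survival activity `Ξ = Tr[ρ (V_0† V_0)⁻¹] − 1`. -/
def survivalActivity (ψ : Fin n → Fin n → ℂ) (p : Fin n → ℝ)
    (V : Fin (M + 1) → Matrix (Fin n) (Fin n) ℂ) : ℝ :=
  ((rho ψ p * ((V 0)ᴴ * V 0)⁻¹).trace).re - 1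

/-- The no-cost baseline `Q_G = Re⟨Ψ̃_0, G Ψ_T⟩`. -/
def noCostBaseline (ψ : Fin n → Fin n → ℂ) (p : Fin n → ℝ)
    (V : Fin (M + 1) → Matrix (Fin n) (Fin n) ℂ)
    (G : Matrix ((Fin n × Fin n) × Fin (M + 1)) ((Fin n × Fin n) × Fin (M + 1)) ℂ) : ℝ :=
  (star (PsiTilde0 ψ p V) ⬝ᵥ (G *ᵥ PsiT ψ p V)).re


section TURHelpers

lemma tvec_dot {α β : Type*} [Fintype α] [Fintype β] (x c : α → ℂ) (y d : β → ℂ) :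
    star (tvec x y) ⬝ᵥ tvec c d = (star x ⬝ᵥ c) * (star y ⬝ᵥ d) := by
  simp only [tvec, dotProduct, Pi.star_apply, StarMul.star_mul, Fintype.sum_prod_type,
    Finset.sum_mul, Finset.mul_sum]
  rw [Finset.sum_comm]
  apply Finset.sum_congr rfl; intro a _
  apply Finset.sum_congr rfl; intro b _
  ring

lemma stdv_dot (M : ℕ) (m m' : Fin (M+1)) :
    star (stdv M m) ⬝ᵥ stdv M m' = if m = m' then (1:ℂ) else 0 := by
  simp only [stdv, dotProduct, Pi.star_apply]
  simp [apply_ite, Finset.sum_ite_eq', eq_comm]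

lemma adj_dot {ι : Type*} [Fintype ι] (A : Matrix ι ι ℂ) (u w : ι → ℂ) :
    star (A *ᵥ u) ⬝ᵥ w = star u ⬝ᵥ (Aᴴ *ᵥ w) := by
  rw [Matrix.star_mulVec, Matrix.dotProduct_mulVec]

lemma cs_re {ι : Type*} [Fintype ι] (x y : ι → ℂ) :
    ((star x ⬝ᵥ y).re)^2 ≤ (star x ⬝ᵥ x).re * (star y ⬝ᵥ y).re := by
  have key := @inner_mul_inner_self_le ℂ (EuclideanSpace ℂ ι) _ _ _
    (WithLp.toLp 2 x) (WithLp.toLp 2 y)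
  have hinner : ∀ a b : EuclideanSpace ℂ ι, (inner ℂ a b : ℂ) = star a.ofLp ⬝ᵥ b.ofLp := by
    intro a b
    simp [PiLp.inner_apply, dotProduct, RCLike.inner_apply, mul_comm]
  rw [hinner, hinner, hinner, hinner] at key
  simp only [WithLp.ofLp_toLp] at key
  have hns : ‖(star y ⬝ᵥ x : ℂ)‖ = ‖(star x ⬝ᵥ y : ℂ)‖ := by
    have : (star y ⬝ᵥ x : ℂ) = star (star x ⬝ᵥ y) := by
      rw [star_dotProduct]
    rw [this, norm_star]
  have h1 : ((star x ⬝ᵥ y).re)^2 ≤ ‖(star x ⬝ᵥ y : ℂ)‖ * ‖(star y ⬝ᵥ x : ℂ)‖ := by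
    rw [hns, ← sq, ← sq_abs]
    have := Complex.abs_re_le_norm (star x ⬝ᵥ y)
    calc |(star x ⬝ᵥ y).re|^2 ≤ ‖(star x ⬝ᵥ y : ℂ)‖^2 := by
          apply pow_le_pow_left₀ (abs_nonneg _)
          simpa using this
      _ = _ := rfl
  exact h1.trans key

lemma sum_dot {ι κ : Type*} [Fintype κ] (s : Finset ι) (f : ι → κ → ℂ) (w : κ → ℂ) :
    (∑ i ∈ s, f i) ⬝ᵥ w = ∑ i ∈ s, f i ⬝ᵥ w := by
  simp only [dotProduct, Finset.sum_apply, Finset.sum_mul]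
  exact Finset.sum_comm

lemma dot_sum {ι κ : Type*} [Fintype κ] (s : Finset ι) (w : κ → ℂ) (f : ι → κ → ℂ) :
    w ⬝ᵥ (∑ i ∈ s, f i) = ∑ i ∈ s, w ⬝ᵥ f i := by
  simp only [dotProduct, Finset.sum_apply, Finset.mul_sum]
  exact Finset.sum_comm

lemma sum_mulVec' {ι κ : Type*} [Fintype κ] (s : Finset ι) (A : ι → Matrix κ κ ℂ) (v : κ → ℂ) :
    (∑ i ∈ s, A i) *ᵥ v = ∑ i ∈ s, A i *ᵥ v := by
  ext j
  simp only [Matrix.mulVec, dotProduct, Finset.sum_apply, Finset.sum_mul, Matrix.sum_apply]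
  exact Finset.sum_comm

lemma trace_vecMulVec_mul {n : ℕ} (x y : Fin n → ℂ) (A : Matrix (Fin n) (Fin n) ℂ) :
    (Matrix.vecMulVec x y * A).trace = y ⬝ᵥ (A *ᵥ x) := by
  simp only [Matrix.trace, Matrix.diag, Matrix.mul_apply, Matrix.vecMulVec_apply,
    Matrix.mulVec, dotProduct, Finset.mul_sum]
  rw [Finset.sum_comm]
  apply Finset.sum_congr rfl; intro a _; apply Finset.sum_congr rfl; intro b _; ring

lemma trace_rho_mul (ψ : Fin n → Fin n → ℂ) (p : Fin n → ℝ) (A : Matrix (Fin n) (Fin n) ℂ) :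
    (rho ψ p * A).trace = ∑ i, (p i : ℂ) * (star (ψ i) ⬝ᵥ (A *ᵥ ψ i)) := by
  unfold rho
  rw [Matrix.sum_mul, Matrix.trace_sum]
  apply Finset.sum_congr rfl; intro i _
  rw [Matrix.smul_mul, Matrix.trace_smul, trace_vecMulVec_mul, smul_eq_mul]

lemma PsiT_dot_self (ψ : Fin n → Fin n → ℂ)
    (hortho : ∀ i j, star (ψ i) ⬝ᵥ ψ j = if i = j then (1 : ℂ) else 0)
    (p : Fin n → ℝ) (hp : ∀ i, 0 ≤ p i) (hp1 : ∑ i, p i = 1)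
    (V : Fin (M + 1) → Matrix (Fin n) (Fin n) ℂ)
    (hKraus : ∑ m, (V m)ᴴ * V m = 1) :
    star (PsiT ψ p V) ⬝ᵥ PsiT ψ p V = 1 := by
  unfold PsiT
  simp only [star_sum, star_smul, sum_dot, dot_sum,
    smul_dotProduct, dotProduct_smul, tvec_dot, stdv_dot, hortho]
  simp only [smul_eq_mul, ite_mul, one_mul, zero_mul, mul_ite, mul_one, mul_zero,
    Finset.sum_ite_eq, Finset.sum_ite_eq', Finset.sum_const_zero, Finset.mem_univ, if_true,
    Complex.star_def, Complex.conj_ofReal]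
  have key : ∀ x, (∑ x_1, star (V x_1 *ᵥ ψ x) ⬝ᵥ (V x_1 *ᵥ ψ x)) = 1 := fun x => by
    calc ∑ x_1, star (V x_1 *ᵥ ψ x) ⬝ᵥ (V x_1 *ᵥ ψ x)
        = ∑ x_1, star (ψ x) ⬝ᵥ (((V x_1)ᴴ * V x_1) *ᵥ ψ x) := by
          simp_rw [adj_dot, Matrix.mulVec_mulVec]
      _ = star (ψ x) ⬝ᵥ ((∑ x_1, (V x_1)ᴴ * V x_1) *ᵥ ψ x) := by
          rw [sum_mulVec', dot_sum]
      _ = 1 := by rw [hKraus, Matrix.one_mulVec, hortho x x, if_pos rfl]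
  simp_rw [← Finset.mul_sum, key, mul_one]
  have hc : ∀ x, (√(p x) : ℂ) * √(p x) = ((p x : ℝ) : ℂ) := fun x => by
    rw [← Complex.ofReal_mul, Real.mul_self_sqrt (hp x)]
  simp_rw [hc]
  exact_mod_cast hp1

lemma PsiTilde0_dot_PsiT (ψ : Fin n → Fin n → ℂ)
    (hortho : ∀ i j, star (ψ i) ⬝ᵥ ψ j = if i = j then (1 : ℂ) else 0)
    (p : Fin n → ℝ) (hp : ∀ i, 0 ≤ p i) (hp1 : ∑ i, p i = 1)
    (V : Fin (M + 1) → Matrix (Fin n) (Fin n) ℂ)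
    (hV0 : IsUnit (V 0)) :
    star (PsiTilde0 ψ p V) ⬝ᵥ PsiT ψ p V = 1 := by
  have hinv : ((V 0)ᴴ)⁻¹ᴴ * V 0 = 1 := by
    rw [Matrix.conjTranspose_nonsing_inv, Matrix.conjTranspose_conjTranspose]
    exact Matrix.nonsing_inv_mul _ ((Matrix.isUnit_iff_isUnit_det _).mp hV0)
  unfold PsiTilde0 PsiT
  simp only [star_sum, star_smul, sum_dot, dot_sum,
    smul_dotProduct, dotProduct_smul, tvec_dot, stdv_dot, hortho]
  simp only [smul_eq_mul, ite_mul, one_mul, zero_mul, mul_ite, mul_one, mul_zero,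
    Finset.sum_ite_eq, Finset.sum_ite_eq', Finset.sum_const_zero, Finset.mem_univ, if_true,
    Complex.star_def, Complex.conj_ofReal, Finset.sum_ite_irrel]
  have key : ∀ x, star (((V 0)ᴴ)⁻¹ *ᵥ ψ x) ⬝ᵥ (V 0 *ᵥ ψ x) = 1 := fun x => by
    rw [adj_dot, Matrix.mulVec_mulVec, hinv, Matrix.one_mulVec, hortho x x, if_pos rfl]
  simp_rw [key, mul_one]
  have hc : ∀ x, (√(p x) : ℂ) * √(p x) = ((p x : ℝ) : ℂ) := fun x => by
    rw [← Complex.ofReal_mul, Real.mul_self_sqrt (hp x)]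
  simp_rw [hc]
  exact_mod_cast hp1

lemma PsiTilde0_dot_self (ψ : Fin n → Fin n → ℂ)
    (hortho : ∀ i j, star (ψ i) ⬝ᵥ ψ j = if i = j then (1 : ℂ) else 0)
    (p : Fin n → ℝ) (hp : ∀ i, 0 ≤ p i)
    (V : Fin (M + 1) → Matrix (Fin n) (Fin n) ℂ)
    (hV0 : IsUnit (V 0)) :
    star (PsiTilde0 ψ p V) ⬝ᵥ PsiTilde0 ψ p V = (rho ψ p * ((V 0)ᴴ * V 0)⁻¹).trace := by
  unfold PsiTilde0
  simp only [star_sum, star_smul, sum_dot, dot_sum,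
    smul_dotProduct, dotProduct_smul, tvec_dot, stdv_dot, hortho]
  simp only [smul_eq_mul, ite_mul, one_mul, zero_mul, mul_ite, mul_one, mul_zero,
    Finset.sum_ite_eq, Finset.sum_ite_eq', Finset.sum_const_zero, Finset.mem_univ, if_true,
    Complex.star_def, Complex.conj_ofReal]
  rw [trace_rho_mul]
  have hinv2 : ((V 0)ᴴ)⁻¹ᴴ * ((V 0)ᴴ)⁻¹ = ((V 0)ᴴ * V 0)⁻¹ := by
    rw [Matrix.conjTranspose_nonsing_inv, Matrix.conjTranspose_conjTranspose,
      Matrix.mul_inv_rev]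
  have key : ∀ x, star (((V 0)ᴴ)⁻¹ *ᵥ ψ x) ⬝ᵥ (((V 0)ᴴ)⁻¹ *ᵥ ψ x)
      = star (ψ x) ⬝ᵥ (((V 0)ᴴ * V 0)⁻¹ *ᵥ ψ x) := fun x => by
    rw [adj_dot, Matrix.mulVec_mulVec, hinv2]
  simp_rw [key, ← mul_assoc]
  have hc : ∀ x, (√(p x) : ℂ) * √(p x) = ((p x : ℝ) : ℂ) := fun x => by
    rw [← Complex.ofReal_mul, Real.mul_self_sqrt (hp x)]
  simp_rw [hc]

end TURHelpers

/-- **General thermodynamic uncertainty relation (Theorem 1).** -/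
theorem general_TUR
    (ψ : Fin n → Fin n → ℂ)
    (hortho : ∀ i j, star (ψ i) ⬝ᵥ ψ j = if i = j then (1 : ℂ) else 0)
    (p : Fin n → ℝ) (hp : ∀ i, 0 ≤ p i) (hp1 : ∑ i, p i = 1)
    (V : Fin (M + 1) → Matrix (Fin n) (Fin n) ℂ)
    (hKraus : ∑ m, (V m)ᴴ * V m = 1)
    (hV0 : IsUnit (V 0))
    (G : Matrix ((Fin n × Fin n) × Fin (M + 1)) ((Fin n × Fin n) × Fin (M + 1)) ℂ)
    (hG : G.IsHermitian) :
    (expval G (PsiT ψ p V) - noCostBaseline ψ p V G) ^ 2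
      ≤ survivalActivity ψ p V * variance G (PsiT ψ p V) := by
  classical
  set Ψ := PsiT ψ p V with hΨdef
  set Φ := PsiTilde0 ψ p V with hΦdef
  have hΨΨ : star Ψ ⬝ᵥ Ψ = 1 := PsiT_dot_self ψ hortho p hp hp1 V hKraus
  have hΦΨ : star Φ ⬝ᵥ Ψ = 1 := PsiTilde0_dot_PsiT ψ hortho p hp hp1 V hV0
  have hΨΦ : star Ψ ⬝ᵥ Φ = 1 := by
    have h := congrArg star hΦΨ
    rwa [star_dotProduct, star_star, star_one] at h
  have hΦΦ : star Φ ⬝ᵥ Φ = (rho ψ p * ((V 0)ᴴ * V 0)⁻¹).trace :=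
    PsiTilde0_dot_self ψ hortho p hp V hV0
  set a : ℝ := expval G Ψ with ha
  set x : (Fin n × Fin n) × Fin (M + 1) → ℂ := Φ - Ψ with hx
  set y : (Fin n × Fin n) × Fin (M + 1) → ℂ := G *ᵥ Ψ - (a : ℂ) • Ψ with hy
  have hGG : star (G *ᵥ Ψ) ⬝ᵥ (G *ᵥ Ψ) = star Ψ ⬝ᵥ ((G * G) *ᵥ Ψ) := by
    rw [adj_dot, Matrix.mulVec_mulVec, hG.eq]
  have hGΨ : star (G *ᵥ Ψ) ⬝ᵥ Ψ = star Ψ ⬝ᵥ (G *ᵥ Ψ) := by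
    rw [adj_dot, hG.eq]
  have hA : (star x ⬝ᵥ y).re = noCostBaseline ψ p V G - a := by
    rw [hx, hy]
    simp only [star_sub, sub_dotProduct, dotProduct_sub,
      dotProduct_smul, hΦΨ, hΨΨ, smul_eq_mul, mul_one]
    simp only [Complex.sub_re, Complex.zero_re, noCostBaseline, expval, ha]
    ring_nf
    simp [noCostBaseline, expval]
    ring
  have hB : (star x ⬝ᵥ x).re = survivalActivity ψ p V := by
    rw [hx]
    simp only [star_sub, sub_dotProduct, dotProduct_sub,
      hΦΦ, hΦΨ, hΨΦ, hΨΨ]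
    simp only [survivalActivity, Complex.sub_re, Complex.one_re]
    ring
  have hC : (star y ⬝ᵥ y).re = variance G Ψ := by
    rw [hy]
    simp only [star_sub, star_smul, sub_dotProduct, dotProduct_sub,
      smul_dotProduct, dotProduct_smul, hGG, hGΨ, hΨΨ, smul_eq_mul, mul_one,
      Complex.star_def, Complex.conj_ofReal]
    simp only [variance, expval, Complex.sub_re, Complex.mul_re, Complex.ofReal_re,
      Complex.ofReal_im, Complex.one_re, Complex.one_im, ha]
    ring
  have key := cs_re x y
  rw [hA, hB, hC] at key
  have hsq : (expval G Ψ - noCostBaseline ψ p V G) ^ 2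
      = (noCostBaseline ψ p V G - a) ^ 2 := by rw [ha]; ring
  rw [hsq]
  exact key
end
end

section
/- (Ancilla protocol measures the time correlator under TPCP dynamics.) Let ρ_f = U_A^c (∑_m (I_2 ⊗ V_m) σ (I_2 ⊗ V_m†)) (U_A^c)†. Then Tr[(σ_x ⊗ I_n) ρ_f] = Re Tr[ρ A(T) B] and Tr[(σ_y ⊗ I_n) ρ_f] = Im Tr[ρ A(T) B], where A(T) = ∑_m V_m† A V_m and σ_x, σ_y are the Pauli matrices on the ancilla qubit. -/
open Matrix Kronecker Finset
open scoped ComplexOrder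

noncomputable section

variable {n M : ℕ}

/-- The controlled unitary `E_00 ⊗ I + E_11 ⊗ A` on the qubit ancilla S′ and the system S. -/
def ctrlU (A : Matrix (Fin n) (Fin n) ℂ) : Matrix (Fin 2 × Fin n) (Fin 2 × Fin n) ℂ :=
  Matrix.single (0 : Fin 2) (0 : Fin 2) (1 : ℂ) ⊗ₖ (1 : Matrix (Fin n) (Fin n) ℂ) +
    Matrix.single (1 : Fin 2) (1 : Fin 2) (1 : ℂ) ⊗ₖ A

/-- The ancilla state `|+⟩ = (e_0 + e_1)/√2`. -/
def plusVec : Fin 2 → ℂ := fun _ => 1 / (Real.sqrt 2 : ℂ)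

/-- Pauli `σ_x`. -/
def pauliX : Matrix (Fin 2) (Fin 2) ℂ := !![0, 1; 1, 0]

/-- Pauli `σ_y`. -/
def pauliY : Matrix (Fin 2) (Fin 2) ℂ := !![0, -Complex.I; Complex.I, 0]

/-- The initial state `ρ_{S′S} = |+⟩⟨+| ⊗ ρ` of the ancilla plus system. -/
def rhoSS (ρ : Matrix (Fin n) (Fin n) ℂ) : Matrix (Fin 2 × Fin n) (Fin 2 × Fin n) ℂ :=
  vecMulVec plusVec (star plusVec) ⊗ₖ ρ

/-- The state `σ = U_B^c ρ_{S′S} (U_B^c)†`. -/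
def sigmaB (ρ B : Matrix (Fin n) (Fin n) ℂ) : Matrix (Fin 2 × Fin n) (Fin 2 × Fin n) ℂ :=
  ctrlU B * rhoSS ρ * (ctrlU B)ᴴ

/-- Partial trace over the ancilla qubit. -/
def ptrQubit (σ : Matrix (Fin 2 × Fin n) (Fin 2 × Fin n) ℂ) : Matrix (Fin n) (Fin n) ℂ :=
  Matrix.of fun a b => ∑ s : Fin 2, σ (s, a) (s, b)

/-- The reduced state `ρ_S^B = Tr_{S′}[σ]`. -/
def rhoSB (ρ B : Matrix (Fin n) (Fin n) ℂ) : Matrix (Fin n) (Fin n) ℂ :=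
  ptrQubit (sigmaB ρ B)

/-- Heisenberg evolution `A(T) = ∑_m V_m† A V_m`. -/
def heisenberg (V : Fin (M + 1) → Matrix (Fin n) (Fin n) ℂ)
    (A : Matrix (Fin n) (Fin n) ℂ) : Matrix (Fin n) (Fin n) ℂ :=
  ∑ m, (V m)ᴴ * A * V m

/-- The final state `ρ_f = U_A^c (∑_m (I_2 ⊗ V_m) σ (I_2 ⊗ V_m†)) (U_A^c)†` of the protocol. -/
def rhoF (ρ A B : Matrix (Fin n) (Fin n) ℂ)
    (V : Fin (M + 1) → Matrix (Fin n) (Fin n) ℂ) :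
    Matrix (Fin 2 × Fin n) (Fin 2 × Fin n) ℂ :=
  ctrlU A *
    (∑ m, ((1 : Matrix (Fin 2) (Fin 2) ℂ) ⊗ₖ V m) * sigmaB ρ B *
      ((1 : Matrix (Fin 2) (Fin 2) ℂ) ⊗ₖ (V m)ᴴ)) *
    (ctrlU A)ᴴ

section AncillaAux

/-- 2×2 block presentation of a matrix on the ancilla+system space. -/
def blk (F : Fin 2 → Fin 2 → Matrix (Fin n) (Fin n) ℂ) :
    Matrix (Fin 2 × Fin n) (Fin 2 × Fin n) ℂ :=
  Matrix.of fun p q => F p.1 q.1 p.2 q.2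

/-- `gP C 0 = 1`, `gP C 1 = C`. -/
def gP (C : Matrix (Fin n) (Fin n) ℂ) (a : Fin 2) : Matrix (Fin n) (Fin n) ℂ :=
  if a = 0 then 1 else C

lemma blk_mul (F G : Fin 2 → Fin 2 → Matrix (Fin n) (Fin n) ℂ) :
    blk F * blk G = blk fun a c => ∑ b, F a b * G b c := by
  ext ⟨a, i⟩ ⟨c, j⟩
  simp [blk, Matrix.mul_apply, Fintype.sum_prod_type]

lemma blk_conjTranspose (F : Fin 2 → Fin 2 → Matrix (Fin n) (Fin n) ℂ) :
    (blk F)ᴴ = blk fun a b => (F b a)ᴴ := by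
  ext ⟨a, i⟩ ⟨b, j⟩
  simp [blk, Matrix.conjTranspose_apply]

lemma blk_trace (F : Fin 2 → Fin 2 → Matrix (Fin n) (Fin n) ℂ) :
    (blk F).trace = ∑ a, (F a a).trace := by
  simp [Matrix.trace, blk, Fintype.sum_prod_type, Matrix.diag]

lemma blk_sum {ι : Type*} (s : Finset ι) (F : ι → Fin 2 → Fin 2 → Matrix (Fin n) (Fin n) ℂ) :
    ∑ m ∈ s, blk (F m) = blk fun a b => ∑ m ∈ s, F m a b := by
  ext ⟨a, i⟩ ⟨b, j⟩
  simp [blk, Matrix.sum_apply]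

lemma blk_congr {F G : Fin 2 → Fin 2 → Matrix (Fin n) (Fin n) ℂ}
    (h : ∀ a b, F a b = G a b) : blk F = blk G := by
  ext ⟨a, i⟩ ⟨b, j⟩
  simp [blk, h]

lemma kron_eq_blk (P : Matrix (Fin 2) (Fin 2) ℂ) (R : Matrix (Fin n) (Fin n) ℂ) :
    P ⊗ₖ R = blk fun a b => P a b • R := by
  ext ⟨a, i⟩ ⟨b, j⟩
  simp [blk, Matrix.kroneckerMap_apply]

lemma ctrlU_eq_blk (A : Matrix (Fin n) (Fin n) ℂ) :
    ctrlU A = blk fun a b => if a = b then gP A a else 0 := by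
  ext ⟨a, i⟩ ⟨b, j⟩
  fin_cases a <;> fin_cases b <;>
    simp [ctrlU, blk, gP, Matrix.single, Matrix.kroneckerMap_apply, Matrix.one_apply]

lemma rhoSS_eq_blk (ρ : Matrix (Fin n) (Fin n) ℂ) :
    rhoSS ρ = blk fun _ _ => (2 : ℂ)⁻¹ • ρ := by
  have h2 : ((Real.sqrt 2 : ℂ))⁻¹ * ((Real.sqrt 2 : ℂ))⁻¹ = (2 : ℂ)⁻¹ := by
    rw [← mul_inv, ← Complex.ofReal_mul, Real.mul_self_sqrt (by norm_num)]; norm_num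
  ext ⟨a, i⟩ ⟨b, j⟩
  simp [rhoSS, blk, Matrix.kroneckerMap_apply, vecMulVec_apply, plusVec, h2]

lemma sigmaB_eq_blk (ρ B : Matrix (Fin n) (Fin n) ℂ) (hB : Bᴴ = B) :
    sigmaB ρ B = blk fun a b => (2 : ℂ)⁻¹ • (gP B a * ρ * gP B b) := by
  rw [sigmaB, ctrlU_eq_blk, rhoSS_eq_blk, blk_conjTranspose, blk_mul, blk_mul]
  apply blk_congr
  intro a b
  fin_cases a <;> fin_cases b <;>
    simp [Fin.sum_univ_two, gP, hB, Matrix.mul_smul, Matrix.smul_mul, Matrix.mul_assoc]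

lemma rhoF_eq_blk (ρ A B : Matrix (Fin n) (Fin n) ℂ)
    (V : Fin (M + 1) → Matrix (Fin n) (Fin n) ℂ) (hA : Aᴴ = A) (hB : Bᴴ = B) :
    rhoF ρ A B V = blk fun a b =>
      (2 : ℂ)⁻¹ • (gP A a * (∑ m, V m * (gP B a * ρ * gP B b) * (V m)ᴴ) * gP A b) := by
  rw [rhoF, ctrlU_eq_blk, sigmaB_eq_blk ρ B hB]
  have hk : ∀ m, ((1 : Matrix (Fin 2) (Fin 2) ℂ) ⊗ₖ V m) *
      blk (fun a b => (2 : ℂ)⁻¹ • (gP B a * ρ * gP B b)) *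
      ((1 : Matrix (Fin 2) (Fin 2) ℂ) ⊗ₖ (V m)ᴴ)
      = blk fun a b => (2 : ℂ)⁻¹ • (V m * (gP B a * ρ * gP B b) * (V m)ᴴ) := by
    intro m
    rw [kron_eq_blk, kron_eq_blk, blk_mul, blk_mul]
    apply blk_congr
    intro a b
    fin_cases a <;> fin_cases b <;>
      simp [Fin.sum_univ_two, Matrix.one_apply, Matrix.mul_smul, Matrix.smul_mul,
        Matrix.mul_assoc]
  simp_rw [hk]
  rw [blk_sum, blk_conjTranspose, blk_mul, blk_mul]
  apply blk_congr
  intro a b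
  fin_cases a <;> fin_cases b <;>
    simp [Fin.sum_univ_two, gP, hA, Matrix.mul_smul, Matrix.smul_mul, Matrix.mul_sum,
      Matrix.sum_mul, Matrix.mul_assoc, Finset.smul_sum]

lemma trace_kron_blk (P : Matrix (Fin 2) (Fin 2) ℂ)
    (R : Fin 2 → Fin 2 → Matrix (Fin n) (Fin n) ℂ) :
    ((P ⊗ₖ (1 : Matrix (Fin n) (Fin n) ℂ)) * blk R).trace
      = ∑ a : Fin 2, ∑ b : Fin 2, P a b * (R b a).trace := by
  rw [kron_eq_blk, blk_mul, blk_trace]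
  simp [Matrix.trace_sum, Matrix.smul_mul, Matrix.trace_smul, smul_eq_mul]

end AncillaAux

lemma cyc1 (A B W ρ : Matrix (Fin n) (Fin n) ℂ) :
    (A * (W * (B * ρ) * Wᴴ)).trace = (ρ * (Wᴴ * A * W) * B).trace := by
  conv_lhs => rw [Matrix.trace_mul_comm]
  simp only [Matrix.mul_assoc]
  conv_lhs => rw [Matrix.trace_mul_comm]
  simp only [Matrix.mul_assoc]
  conv_lhs => rw [Matrix.trace_mul_comm]
  simp only [Matrix.mul_assoc]

lemma cyc2 (A B W ρ : Matrix (Fin n) (Fin n) ℂ) :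
    ((W * (ρ * B) * Wᴴ) * A).trace = (ρ * B * (Wᴴ * A * W)).trace := by
  simp only [Matrix.mul_assoc]
  conv_lhs => rw [Matrix.trace_mul_comm]
  simp only [Matrix.mul_assoc]

/-- **The ancilla protocol measures the time correlator under TPCP dynamics.** -/
theorem ancilla_protocol_measures_correlator
    (ρ : Matrix (Fin n) (Fin n) ℂ) (hρ : ρ.PosSemidef) (hρ1 : ρ.trace = 1)
    (A B : Matrix (Fin n) (Fin n) ℂ)
    (hA : A.IsHermitian) (hAu : A * A = 1)
    (hB : B.IsHermitian) (hBu : B * B = 1)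
    (V : Fin (M + 1) → Matrix (Fin n) (Fin n) ℂ)
    (hKraus : ∑ m, (V m)ᴴ * V m = 1) :
    ((pauliX ⊗ₖ (1 : Matrix (Fin n) (Fin n) ℂ)) * rhoF ρ A B V).trace
        = (((ρ * heisenberg V A * B).trace).re : ℂ) ∧
      ((pauliY ⊗ₖ (1 : Matrix (Fin n) (Fin n) ℂ)) * rhoF ρ A B V).trace
        = (((ρ * heisenberg V A * B).trace).im : ℂ) := by
  have hρh : ρᴴ = ρ := hρ.1
  have hAT : (heisenberg V A)ᴴ = heisenberg V A := by
    simp [heisenberg, Matrix.conjTranspose_sum, Matrix.conjTranspose_mul, hA.eq,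
      Matrix.mul_assoc]
  have hF := rhoF_eq_blk ρ A B V hA.eq hB.eq
  set z := (ρ * heisenberg V A * B).trace with hzdef
  -- the trace of the (1,0) block piece equals `z`
  have h10 : (A * (∑ m, V m * (B * ρ * 1) * (V m)ᴴ) * 1).trace = z := by
    rw [hzdef]
    simp only [Matrix.mul_one, Matrix.mul_sum, Matrix.sum_mul, Matrix.trace_sum, heisenberg]
    refine Finset.sum_congr rfl fun m _ => ?_
    exact cyc1 A B (V m) ρ
  -- the trace of the (0,1) block piece equals `star z`
  have hsz : (starRingEnd ℂ) z = (ρ * B * heisenberg V A).trace := by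
    rw [hzdef, ← Complex.star_def, ← Matrix.trace_conjTranspose]
    simp only [Matrix.conjTranspose_mul, hAT, hB.eq, hρh]
    conv_lhs => rw [Matrix.trace_mul_comm]
    simp only [Matrix.mul_assoc]
    conv_lhs => rw [Matrix.trace_mul_comm]
    simp only [Matrix.mul_assoc]
  have h01 : (1 * (∑ m, V m * (1 * ρ * B) * (V m)ᴴ) * A).trace = (starRingEnd ℂ) z := by
    rw [hsz]
    simp only [Matrix.one_mul, Matrix.mul_sum, Matrix.sum_mul, Matrix.trace_sum, heisenberg]
    refine Finset.sum_congr rfl fun m _ => ?_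
    exact cyc2 A B (V m) ρ
  constructor
  · rw [hF, trace_kron_blk]
    simp only [Fin.sum_univ_two, pauliX, gP, Matrix.cons_val', Matrix.cons_val_zero,
      Matrix.cons_val_one, Matrix.head_cons, Matrix.head_fin_const, Matrix.empty_val',
      Matrix.cons_val_fin_one, Matrix.trace_smul, smul_eq_mul, if_true, if_false,
      Fin.one_eq_zero_iff, Nat.succ_ne_self, ite_true, ite_false, reduceIte]
    rw [h10, h01]
    rw [Complex.re_eq_add_conj]
    norm_num
    ring
  · rw [hF, trace_kron_blk]
    simp only [Fin.sum_univ_two, pauliY, gP, Matrix.cons_val', Matrix.cons_val_zero,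
      Matrix.cons_val_one, Matrix.head_cons, Matrix.head_fin_const, Matrix.empty_val',
      Matrix.cons_val_fin_one, Matrix.trace_smul, smul_eq_mul, if_true, if_false,
      Fin.one_eq_zero_iff, Nat.succ_ne_self, ite_true, ite_false, reduceIte]
    rw [h10, h01]
    rw [Complex.im_eq_sub_conj]
    norm_num
    ring_nf
    simp [Complex.I_sq]
    ring
end
end

section
/- (Binomial-expansion formula for the survival activity.) Let A ∈ M_n(ℂ) be positive definite with I − A positive semidefinite, and let ρ ∈ M_n(ℂ) be a density matrix. Then the sequence N ↦ ∑_{k=0}^{N} (−1)^k · binom(N+1, k+1) · Tr[ρ A^k] converges, as N → ∞, to Tr[ρ A^{−1}]. In particular, with A = V_0† V_0, the survival activity Ξ = Tr[ρ (V_0† V_0)^{−1}] − 1 equals lim_{N→∞} ∑_{k=0}^{N} (−1)^k binom(N+1, k+1) Tr[ρ (V_0† V_0)^k] − 1. -/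
open Matrix Finset Filter
open scoped ComplexOrder

noncomputable section

/-- **Binomial-expansion formula for the survival activity.** For a positive definite `A` with
`I − A` positive semidefinite and a density matrix `ρ`, the partial sums
`∑_{k=0}^{N} (−1)^k binom(N+1, k+1) Tr[ρ A^k]` converge to `Tr[ρ A⁻¹]` as `N → ∞`.
(In particular, with `A = V_0† V_0` this computes the survival activity
`Ξ = Tr[ρ (V_0† V_0)⁻¹] − 1` as a limit of binomial sums.) -/
theorem binomial_expansion_survival_activity {n : ℕ}
    (A : Matrix (Fin n) (Fin n) ℂ) (hA : A.PosDef) (hIA : (1 - A).PosSemidef)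
    (ρ : Matrix (Fin n) (Fin n) ℂ) (hρ : ρ.PosSemidef) (hρ1 : ρ.trace = 1) :
    Tendsto
      (fun N : ℕ => ∑ k ∈ Finset.range (N + 1),
        (-1 : ℂ) ^ k * ((N + 1).choose (k + 1) : ℂ) * (ρ * A ^ k).trace)
      atTop (nhds ((ρ * A⁻¹).trace)) := by
  classical
  set B : Matrix (Fin n) (Fin n) ℂ := 1 - A with hBdef
  have hB : B.IsHermitian := hIA.1
  set U : Matrix (Fin n) (Fin n) ℂ := (hB.eigenvectorUnitary : Matrix (Fin n) (Fin n) ℂ)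
    with hUdef
  set μ : Fin n → ℝ := hB.eigenvalues with hμdef
  -- eigenvalue bounds
  have hnn : ∀ i, 0 ≤ μ i := hIA.eigenvalues_nonneg
  have hlt : ∀ i, μ i < 1 := by
    intro i
    have hne : hB.eigenvectorBasis i ≠ 0 := hB.eigenvectorBasis.orthonormal.ne_zero i
    have hvne : (WithLp.equiv 2 (Fin n → ℂ)) (hB.eigenvectorBasis i) ≠ 0 := by
      intro h0
      exact hne ((WithLp.equiv 2 (Fin n → ℂ)).injective (by simpa using h0))
    have hpos := hA.dotProduct_mulVec_pos hvne
    have heq := hB.eigenvalues_eq i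
    have hvv : dotProduct (star ((WithLp.equiv 2 (Fin n → ℂ)) (hB.eigenvectorBasis i)))
        ((WithLp.equiv 2 (Fin n → ℂ)) (hB.eigenvectorBasis i)) = 1 := by
      change star (hB.eigenvectorBasis i).ofLp ⬝ᵥ (hB.eigenvectorBasis i).ofLp = 1
      rw [dotProduct_comm, ← EuclideanSpace.inner_eq_star_dotProduct]
      rw [@inner_self_eq_norm_sq_to_K ℂ]
      rw [hB.eigenvectorBasis.orthonormal.1 i]
      norm_num
    have hBv : B *ᵥ ((WithLp.equiv 2 (Fin n → ℂ)) (hB.eigenvectorBasis i))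
        = ((WithLp.equiv 2 (Fin n → ℂ)) (hB.eigenvectorBasis i))
          - A *ᵥ ((WithLp.equiv 2 (Fin n → ℂ)) (hB.eigenvectorBasis i)) := by
      show (1 - A) *ᵥ _ = _
      rw [sub_mulVec, one_mulVec]
    have hμeq : μ i = 1 - Complex.re
        (dotProduct (star ((WithLp.equiv 2 (Fin n → ℂ)) (hB.eigenvectorBasis i)))
          (A *ᵥ ((WithLp.equiv 2 (Fin n → ℂ)) (hB.eigenvectorBasis i)))) := by
      rw [hμdef, heq]
      change RCLike.re (star ((WithLp.equiv 2 (Fin n → ℂ)) (hB.eigenvectorBasis i)) ⬝ᵥ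
        B *ᵥ (WithLp.equiv 2 (Fin n → ℂ)) (hB.eigenvectorBasis i)) = _
      rw [hBv, dotProduct_sub, hvv]
      simp
    have hre : 0 < Complex.re
        (dotProduct (star ((WithLp.equiv 2 (Fin n → ℂ)) (hB.eigenvectorBasis i)))
          (A *ᵥ ((WithLp.equiv 2 (Fin n → ℂ)) (hB.eigenvectorBasis i)))) := by
      rw [Complex.lt_def] at hpos
      simpa using hpos.1
    rw [hμeq]; linarith
  -- helper: scalar form of (-A)^m * ↑c
  have htm : ∀ (m c : ℕ), (-A) ^ m * (c : Matrix (Fin n) (Fin n) ℂ)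
      = ((-1 : ℂ) ^ m * (c : ℂ)) • A ^ m := by
    intro m c
    rw [← neg_one_smul ℂ A, smul_pow, smul_mul_assoc, ← nsmul_eq_mul',
      ← Nat.cast_smul_eq_nsmul ℂ, smul_smul]
  -- key algebraic identity
  have hkey : ∀ N : ℕ, ∑ k ∈ Finset.range (N + 1),
      ((-1 : ℂ) ^ k * ((N + 1).choose (k + 1) : ℂ)) • A ^ k
      = A⁻¹ * (1 - B ^ (N + 1)) := by
    intro N
    have hbin : B ^ (N + 1) = ∑ m ∈ Finset.range (N + 2),
        ((-1 : ℂ) ^ m * ((N + 1).choose m : ℂ)) • A ^ m := by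
      have hc : Commute (-A) (1 : Matrix (Fin n) (Fin n) ℂ) := Commute.one_right _
      have h := hc.add_pow (N + 1)
      have h1 : B ^ (N + 1) = ∑ m ∈ Finset.range (N + 2),
          (-A) ^ m * ((N + 1).choose m : Matrix (Fin n) (Fin n) ℂ) := by
        simpa [hBdef, sub_eq_neg_add] using h
      rw [h1]
      exact Finset.sum_congr rfl fun m _ => htm m _
    have hAS : A * (∑ k ∈ Finset.range (N + 1),
        ((-1 : ℂ) ^ k * ((N + 1).choose (k + 1) : ℂ)) • A ^ k) = 1 - B ^ (N + 1) := by
      have hL : A * (∑ k ∈ Finset.range (N + 1),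
          ((-1 : ℂ) ^ k * ((N + 1).choose (k + 1) : ℂ)) • A ^ k)
          = ∑ k ∈ Finset.range (N + 1),
            ((-1 : ℂ) ^ k * ((N + 1).choose (k + 1) : ℂ)) • A ^ (k + 1) := by
        rw [Finset.mul_sum]
        exact Finset.sum_congr rfl fun k _ => by rw [mul_smul_comm, ← pow_succ']
      rw [hL, hbin, Finset.sum_range_succ'
        (fun m => ((-1 : ℂ) ^ m * ((N + 1).choose m : ℂ)) • A ^ m) (N + 1)]
      simp only [pow_zero, Nat.choose_zero_right, Nat.cast_one, one_mul, one_smul]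
      have hterm : ∀ k, ((-1 : ℂ) ^ k * ((N + 1).choose (k + 1) : ℂ)) • A ^ (k + 1)
          = -(((-1 : ℂ) ^ (k + 1) * ((N + 1).choose (k + 1) : ℂ)) • A ^ (k + 1)) := by
        intro k
        rw [← neg_smul]
        congr 1
        ring
      rw [Finset.sum_congr rfl fun k _ => hterm k, Finset.sum_neg_distrib]
      abel
    have hinv : A⁻¹ * A = 1 := Matrix.nonsing_inv_mul A hA.det_pos.ne'.isUnit
    calc ∑ k ∈ Finset.range (N + 1), ((-1 : ℂ) ^ k * ((N + 1).choose (k + 1) : ℂ)) • A ^ k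
        = A⁻¹ * (A * ∑ k ∈ Finset.range (N + 1),
            ((-1 : ℂ) ^ k * ((N + 1).choose (k + 1) : ℂ)) • A ^ k) := by
          rw [← mul_assoc, hinv, one_mul]
      _ = A⁻¹ * (1 - B ^ (N + 1)) := by rw [hAS]
  -- rewrite the partial sums
  have hfun : ∀ N : ℕ, (∑ k ∈ Finset.range (N + 1),
      (-1 : ℂ) ^ k * ((N + 1).choose (k + 1) : ℂ) * (ρ * A ^ k).trace)
      = (ρ * A⁻¹).trace - (ρ * A⁻¹ * B ^ (N + 1)).trace := by
    intro N
    have h1 : (∑ k ∈ Finset.range (N + 1),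
        (-1 : ℂ) ^ k * ((N + 1).choose (k + 1) : ℂ) * (ρ * A ^ k).trace)
        = (ρ * ∑ k ∈ Finset.range (N + 1),
            ((-1 : ℂ) ^ k * ((N + 1).choose (k + 1) : ℂ)) • A ^ k).trace := by
      rw [Finset.mul_sum, trace_sum]
      exact Finset.sum_congr rfl fun k _ => by
        rw [mul_smul_comm, trace_smul, smul_eq_mul]
    rw [h1, hkey, ← Matrix.mul_assoc, mul_sub, mul_one, trace_sub]
  simp only [hfun]
  have h0 : Tendsto (fun N : ℕ => (ρ * A⁻¹ * B ^ (N + 1)).trace) atTop (nhds 0) := by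
    have hpow : ∀ m : ℕ, B ^ m = U * (diagonal ((fun r : ℝ => (r : ℂ)) ∘ μ)) ^ m * star U := by
      intro m
      induction m with
      | zero =>
        simp only [pow_zero, Matrix.mul_one, hUdef]
        exact (Unitary.coe_mul_star_self hB.eigenvectorUnitary).symm
      | succ m ih =>
        have hsU : star U * U = 1 := Unitary.coe_star_mul_self hB.eigenvectorUnitary
        rw [pow_succ, ih]
        conv_lhs => rw [hB.spectral_theorem]
        rw [pow_succ]
        calc U * diagonal ((fun r : ℝ => (r : ℂ)) ∘ μ) ^ m * star U *
              (U * diagonal (RCLike.ofReal ∘ hB.eigenvalues) * star ↑hB.eigenvectorUnitary)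
            = U * diagonal ((fun r : ℝ => (r : ℂ)) ∘ μ) ^ m * (star U * U) *
                diagonal ((fun r : ℝ => (r : ℂ)) ∘ μ) * star U := by
              simp only [Matrix.mul_assoc]; rfl
          _ = U * (diagonal ((fun r : ℝ => (r : ℂ)) ∘ μ) ^ m *
                diagonal ((fun r : ℝ => (r : ℂ)) ∘ μ)) * star U := by
              rw [hsU, Matrix.mul_one]
              simp only [Matrix.mul_assoc]
          _ = _ := rfl
    have htr : ∀ m : ℕ, (ρ * A⁻¹ * B ^ m).trace
        = ∑ i, (star U * (ρ * A⁻¹) * U) i i * ((μ i : ℂ)) ^ m := by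
      intro m
      rw [hpow m, Matrix.diagonal_pow]
      rw [show ρ * A⁻¹ * (U * diagonal (((fun r : ℝ => (r : ℂ)) ∘ μ) ^ m) * star U)
          = (ρ * A⁻¹ * (U * diagonal (((fun r : ℝ => (r : ℂ)) ∘ μ) ^ m))) * star U by
        simp only [Matrix.mul_assoc]]
      rw [Matrix.trace_mul_comm]
      simp only [← Matrix.mul_assoc]
      rw [Matrix.trace]
      congr 1
      ext i
      simp [Matrix.diag, Matrix.mul_diagonal, Function.comp]
    simp only [htr]
    have hz : (0 : ℂ) = ∑ i : Fin n, (star U * (ρ * A⁻¹) * U) i i * 0 := by simp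
    rw [hz]
    apply tendsto_finset_sum
    intro i _
    have hμlt : ‖((μ i : ℂ))‖ < 1 := by
      rw [Complex.norm_real, Real.norm_eq_abs, abs_lt]
      exact ⟨by linarith [hnn i], hlt i⟩
    have hp : Tendsto (fun m : ℕ => ((μ i : ℂ)) ^ m) atTop (nhds 0) :=
      tendsto_pow_atTop_nhds_zero_of_norm_lt_one hμlt
    have hp' : Tendsto (fun N : ℕ => ((μ i : ℂ)) ^ (N + 1)) atTop (nhds 0) :=
      hp.comp (tendsto_add_atTop_nat 1)
    simpa using hp'.const_mul ((star U * (ρ * A⁻¹) * U) i i)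
  have := (tendsto_const_nhds (x := (ρ * A⁻¹).trace) (f := atTop)).sub h0
  simpa using this
end
end

section
/- (Thermodynamic bound on classical-type cross correlations.) Let G_R, G_S ∈ M_n(ℂ) be Hermitian, let G = G_R ⊗ G_S ⊗ I_M, and let g_max ≥ 0 satisfy ‖G x‖ ≤ g_max ‖x‖ for all x ∈ ℂ^n ⊗ ℂ^n ⊗ ℂ^M. Then the cross correlator R(0,T) = ⟨Ψ_T, G Ψ_T⟩ = ∑_{i,j} √(p_i p_j) Tr[G_R ψ_i ψ_j†] Tr[G_S ∑_m V_m ψ_i ψ_j† V_m†] satisfies Q_G − √(g_max² · Ξ) ≤ R(0,T) ≤ Q_G + √(g_max² · Ξ), where Q_G = Re⟨Ψ̃_0, G Ψ_T⟩ and Ξ = Tr[ρ (V_0† V_0)^{−1}] − 1. -/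
open Matrix Kronecker Finset

noncomputable section

variable {n M : ℕ}

namespace CCB

lemma sum_dot {γ ι : Type*} [Fintype ι] (s : Finset γ) (f : γ → ι → ℂ) (w : ι → ℂ) :
    (∑ i ∈ s, f i) ⬝ᵥ w = ∑ i ∈ s, f i ⬝ᵥ w := by
  simp only [dotProduct, Finset.sum_apply, Finset.sum_mul]
  exact Finset.sum_comm

lemma dot_sum {γ ι : Type*} [Fintype ι] (s : Finset γ) (w : ι → ℂ) (f : γ → ι → ℂ) :
    w ⬝ᵥ (∑ i ∈ s, f i) = ∑ i ∈ s, w ⬝ᵥ f i := by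
  simp only [dotProduct, Finset.sum_apply, Finset.mul_sum]
  exact Finset.sum_comm

lemma sum_mulVec {γ ι : Type*} [Fintype ι] (s : Finset γ) (A : γ → Matrix ι ι ℂ) (x : ι → ℂ) :
    (∑ m ∈ s, A m) *ᵥ x = ∑ m ∈ s, A m *ᵥ x := by
  funext j
  simp only [mulVec, dotProduct, Finset.sum_apply, Matrix.sum_apply, Finset.sum_mul]
  rw [Finset.sum_comm]

lemma tvec_dot {α β : Type*} [Fintype α] [Fintype β] (u v : α → ℂ) (x y : β → ℂ) :
    tvec u x ⬝ᵥ tvec v y = (u ⬝ᵥ v) * (x ⬝ᵥ y) := by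
  simp only [dotProduct, tvec]
  rw [Fintype.sum_prod_type, Finset.sum_mul_sum]
  exact Finset.sum_congr rfl fun i _ => Finset.sum_congr rfl fun k _ => by ring

lemma star_tvec {α β : Type*} (u : α → ℂ) (x : β → ℂ) :
    star (tvec u x) = tvec (star u) (star x) := by
  funext q; simp [tvec, mul_comm]

lemma stdv_dot (m m' : Fin (M + 1)) :
    star (stdv M m) ⬝ᵥ stdv M m' = if m = m' then (1 : ℂ) else 0 := by
  by_cases h : m = m'
  · simp [h, stdv, dotProduct]
  · simp [stdv, dotProduct, apply_ite (star : ℂ → ℂ), h, Ne.symm h]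

lemma sum_ite_push {γ : Type*} (s : Finset γ) (c : Prop) [Decidable c] (f : γ → ℂ) :
    ∑ x ∈ s, (if c then f x else 0) = if c then ∑ x ∈ s, f x else 0 := by
  split <;> simp

lemma dot3 (u u' v v' : Fin n → ℂ) (x y : Fin (M+1) → ℂ) :
    star (tvec (tvec u v) x) ⬝ᵥ tvec (tvec u' v') y
      = (star u ⬝ᵥ u') * (star v ⬝ᵥ v') * (star x ⬝ᵥ y) := by
  rw [star_tvec, star_tvec, tvec_dot, tvec_dot]

lemma trace_vmv (x y : Fin n → ℂ) (B : Matrix (Fin n) (Fin n) ℂ) :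
    (vecMulVec x y * B).trace = y ⬝ᵥ (B *ᵥ x) := by
  simp only [Matrix.trace, Matrix.diag_apply, Matrix.mul_apply, vecMulVec_apply,
    dotProduct, mulVec, Finset.mul_sum]
  rw [Finset.sum_comm]
  exact Finset.sum_congr rfl fun i _ => Finset.sum_congr rfl fun k _ => by ring

variable (ψ : Fin n → Fin n → ℂ) (p : Fin n → ℝ)
  (V : Fin (M + 1) → Matrix (Fin n) (Fin n) ℂ)

lemma dot_bb
    (hortho : ∀ i j, star (ψ i) ⬝ᵥ ψ j = if i = j then (1 : ℂ) else 0)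
    (hp : ∀ i, 0 ≤ p i) (hp1 : ∑ i, p i = 1)
    (hKraus : ∑ m, (V m)ᴴ * V m = 1) :
    star (PsiT ψ p V) ⬝ᵥ PsiT ψ p V = 1 := by
  unfold PsiT
  simp only [star_sum, star_smul, sum_dot, dot_sum, smul_dotProduct, dotProduct_smul,
    Complex.star_def, Complex.conj_ofReal, dot3, stdv_dot, hortho, smul_eq_mul]
  simp only [ite_mul, mul_ite, one_mul, zero_mul, mul_one, mul_zero,
    sum_ite_push, Finset.sum_ite_eq, Finset.sum_ite_eq', Finset.mem_univ, if_true, ite_true]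
  have key : ∀ i, ∑ m, star (V m *ᵥ ψ i) ⬝ᵥ (V m *ᵥ ψ i) = 1 := by
    intro i
    have h2 : ∀ m : Fin (M+1), star (V m *ᵥ ψ i) ⬝ᵥ (V m *ᵥ ψ i)
        = star (ψ i) ⬝ᵥ (((V m)ᴴ * V m) *ᵥ ψ i) := fun m => by
      rw [star_mulVec, ← dotProduct_mulVec, mulVec_mulVec]
    simp_rw [h2]
    rw [← dot_sum, ← sum_mulVec, hKraus, one_mulVec, hortho]
    simp
  have h3 : ∀ i : Fin n, ∑ m, ((Real.sqrt (p i) : ℂ)) * ((Real.sqrt (p i) : ℂ) *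
      (star (V m *ᵥ ψ i) ⬝ᵥ (V m *ᵥ ψ i))) = (p i : ℂ) := by
    intro i
    simp only [← mul_assoc, ← Finset.mul_sum]
    rw [key i, mul_one, ← Complex.ofReal_mul, Real.mul_self_sqrt (hp i)]
  simp_rw [h3]
  rw [← Complex.ofReal_sum, hp1, Complex.ofReal_one]

lemma dot_ab
    (hortho : ∀ i j, star (ψ i) ⬝ᵥ ψ j = if i = j then (1 : ℂ) else 0)
    (hp : ∀ i, 0 ≤ p i) (hp1 : ∑ i, p i = 1)
    (hV0 : IsUnit (V 0)) :
    star (PsiTilde0 ψ p V) ⬝ᵥ PsiT ψ p V = 1 := by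
  have hdet : IsUnit (V 0).det := (Matrix.isUnit_iff_isUnit_det _).mp hV0
  unfold PsiT PsiTilde0
  simp only [star_sum, star_smul, sum_dot, dot_sum, smul_dotProduct, dotProduct_smul,
    Complex.star_def, Complex.conj_ofReal, dot3, stdv_dot, hortho, smul_eq_mul]
  simp only [ite_mul, mul_ite, one_mul, zero_mul, mul_one, mul_zero,
    sum_ite_push, Finset.sum_ite_eq, Finset.sum_ite_eq', Finset.mem_univ, if_true, ite_true]
  have h2 : ∀ i, star ((((V 0)ᴴ)⁻¹) *ᵥ ψ i) ⬝ᵥ (V 0 *ᵥ ψ i) = 1 := by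
    intro i
    rw [star_mulVec, ← dotProduct_mulVec, mulVec_mulVec]
    have h4 : (((V 0)ᴴ)⁻¹)ᴴ = (V 0)⁻¹ := by
      rw [← Matrix.conjTranspose_nonsing_inv, conjTranspose_conjTranspose]
    rw [h4, Matrix.nonsing_inv_mul _ hdet, one_mulVec, hortho]
    simp
  simp_rw [h2, mul_one, ← Complex.ofReal_mul]
  simp_rw [Real.mul_self_sqrt (hp _)]
  rw [← Complex.ofReal_sum, hp1, Complex.ofReal_one]

lemma dot_aa
    (hortho : ∀ i j, star (ψ i) ⬝ᵥ ψ j = if i = j then (1 : ℂ) else 0)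
    (hp : ∀ i, 0 ≤ p i) (hV0 : IsUnit (V 0)) :
    star (PsiTilde0 ψ p V) ⬝ᵥ PsiTilde0 ψ p V
      = (rho ψ p * ((V 0)ᴴ * V 0)⁻¹).trace := by
  have hB : ((V 0)ᴴ * V 0)⁻¹ = (V 0)⁻¹ * ((V 0)ᴴ)⁻¹ := Matrix.mul_inv_rev _ _
  unfold PsiTilde0
  simp only [star_sum, star_smul, sum_dot, dot_sum, smul_dotProduct, dotProduct_smul,
    Complex.star_def, Complex.conj_ofReal, dot3, stdv_dot, hortho, smul_eq_mul]
  simp only [ite_mul, mul_ite, one_mul, zero_mul, mul_one, mul_zero,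
    sum_ite_push, Finset.sum_ite_eq, Finset.sum_ite_eq', Finset.mem_univ, if_true, ite_true]
  have h2 : ∀ i, star ((((V 0)ᴴ)⁻¹) *ᵥ ψ i) ⬝ᵥ ((((V 0)ᴴ)⁻¹) *ᵥ ψ i)
      = star (ψ i) ⬝ᵥ ((((V 0)ᴴ * V 0)⁻¹) *ᵥ ψ i) := by
    intro i
    rw [star_mulVec, ← dotProduct_mulVec, mulVec_mulVec]
    have h4 : (((V 0)ᴴ)⁻¹)ᴴ = (V 0)⁻¹ := by
      rw [← Matrix.conjTranspose_nonsing_inv, conjTranspose_conjTranspose]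
    rw [h4, hB]
  simp_rw [h2]
  unfold rho
  rw [Finset.sum_mul, trace_sum]
  simp_rw [smul_mul_assoc, trace_smul, trace_vmv, smul_eq_mul, ← mul_assoc,
    ← Complex.ofReal_mul]
  simp_rw [Real.mul_self_sqrt (hp _)]

end CCB

/-- **Thermodynamic bound on classical-type cross correlations.** The cross correlator
`R(0,T) = ⟨Ψ_T, (G_R ⊗ G_S ⊗ I) Ψ_T⟩` is bounded as
`Q_G − √(g_max² Ξ) ≤ R(0,T) ≤ Q_G + √(g_max² Ξ)`. -/
theorem cross_correlation_bound
    (ψ : Fin n → Fin n → ℂ)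
    (hortho : ∀ i j, star (ψ i) ⬝ᵥ ψ j = if i = j then (1 : ℂ) else 0)
    (p : Fin n → ℝ) (hp : ∀ i, 0 ≤ p i) (hp1 : ∑ i, p i = 1)
    (V : Fin (M + 1) → Matrix (Fin n) (Fin n) ℂ)
    (hKraus : ∑ m, (V m)ᴴ * V m = 1)
    (hV0 : IsUnit (V 0))
    (GR GS : Matrix (Fin n) (Fin n) ℂ) (hGR : GR.IsHermitian) (hGS : GS.IsHermitian)
    (gmax : ℝ) (hgmax0 : 0 ≤ gmax)
    (hgmax : ∀ x : (Fin n × Fin n) × Fin (M + 1) → ℂ,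
      Real.sqrt (∑ k, ‖
          ((((GR ⊗ₖ GS) ⊗ₖ (1 : Matrix (Fin (M + 1)) (Fin (M + 1)) ℂ)) *ᵥ x) k)‖ ^ 2)
        ≤ gmax * Real.sqrt (∑ k, ‖x k‖ ^ 2)) :
    noCostBaseline ψ p V ((GR ⊗ₖ GS) ⊗ₖ (1 : Matrix (Fin (M + 1)) (Fin (M + 1)) ℂ)) -
          Real.sqrt (gmax ^ 2 * survivalActivity ψ p V)
        ≤ expval ((GR ⊗ₖ GS) ⊗ₖ (1 : Matrix (Fin (M + 1)) (Fin (M + 1)) ℂ)) (PsiT ψ p V) ∧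
      expval ((GR ⊗ₖ GS) ⊗ₖ (1 : Matrix (Fin (M + 1)) (Fin (M + 1)) ℂ)) (PsiT ψ p V)
        ≤ noCostBaseline ψ p V ((GR ⊗ₖ GS) ⊗ₖ (1 : Matrix (Fin (M + 1)) (Fin (M + 1)) ℂ)) +
          Real.sqrt (gmax ^ 2 * survivalActivity ψ p V) := by
  classical
  set Gm := (GR ⊗ₖ GS) ⊗ₖ (1 : Matrix (Fin (M + 1)) (Fin (M + 1)) ℂ) with hGmdef
  let E := EuclideanSpace ℂ ((Fin n × Fin n) × Fin (M + 1))
  let bE : E := WithLp.toLp 2 (PsiT ψ p V)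
  let aE : E := WithLp.toLp 2 (PsiTilde0 ψ p V)
  let cE : E := WithLp.toLp 2 (Gm *ᵥ PsiT ψ p V)
  have hinner : ∀ x y : (Fin n × Fin n) × Fin (M + 1) → ℂ,
      (inner (𝕜 := ℂ) (WithLp.toLp 2 x : E) (WithLp.toLp 2 y : E)) = star x ⬝ᵥ y := by
    intro x y
    simp [PiLp.inner_apply, RCLike.inner_apply, dotProduct, E, mul_comm]
  have hnorm : ∀ x : (Fin n × Fin n) × Fin (M + 1) → ℂ,
      ‖(WithLp.toLp 2 x : E)‖ = Real.sqrt (∑ k, ‖x k‖ ^ 2) := by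
    intro x
    simp [EuclideanSpace.norm_eq]
  have hbb : (inner (𝕜 := ℂ) bE bE) = 1 := by
    rw [show (inner (𝕜 := ℂ) bE bE) = star (PsiT ψ p V) ⬝ᵥ PsiT ψ p V from hinner _ _]
    exact CCB.dot_bb ψ p V hortho hp hp1 hKraus
  have hab : (inner (𝕜 := ℂ) aE bE) = 1 := by
    rw [show (inner (𝕜 := ℂ) aE bE) = star (PsiTilde0 ψ p V) ⬝ᵥ PsiT ψ p V from hinner _ _]
    exact CCB.dot_ab ψ p V hortho hp hp1 hV0
  have haa : (inner (𝕜 := ℂ) aE aE) = (rho ψ p * ((V 0)ᴴ * V 0)⁻¹).trace := by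
    rw [show (inner (𝕜 := ℂ) aE aE) = star (PsiTilde0 ψ p V) ⬝ᵥ PsiTilde0 ψ p V from hinner _ _]
    exact CCB.dot_aa ψ p V hortho hp hV0
  have hba : (inner (𝕜 := ℂ) bE aE) = 1 := by
    rw [← inner_conj_symm, hab]; simp
  have hb1 : ‖bE‖ = 1 := by
    have h3 : ‖bE‖ ^ 2 = 1 := by
      rw [← inner_self_eq_norm_sq (𝕜 := ℂ), hbb]
      simp
    nlinarith [norm_nonneg bE]
  have hcb : ‖cE‖ ≤ gmax := by
    have h := hgmax (PsiT ψ p V)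
    rw [← hnorm (Gm *ᵥ PsiT ψ p V), ← hnorm (PsiT ψ p V)] at h
    rw [hb1, mul_one] at h
    exact h
  have hdd : (inner (𝕜 := ℂ) (bE - aE) (bE - aE))
      = (rho ψ p * ((V 0)ᴴ * V 0)⁻¹).trace - 1 := by
    rw [inner_sub_sub_self, hbb, hba, hab, haa]
    ring
  have hXi : survivalActivity ψ p V = ‖bE - aE‖ ^ 2 := by
    rw [← inner_self_eq_norm_sq (𝕜 := ℂ), hdd]
    unfold survivalActivity
    simp [Complex.sub_re]
  have hsqrt : Real.sqrt (gmax ^ 2 * survivalActivity ψ p V) = gmax * ‖bE - aE‖ := by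
    rw [hXi, Real.sqrt_mul (sq_nonneg _), Real.sqrt_sq hgmax0, Real.sqrt_sq (norm_nonneg _)]
  have hdiff : expval Gm (PsiT ψ p V) - noCostBaseline ψ p V Gm
      = (inner (𝕜 := ℂ) (bE - aE) cE).re := by
    have h1 : (inner (𝕜 := ℂ) (bE - aE) cE)
        = star (PsiT ψ p V) ⬝ᵥ (Gm *ᵥ PsiT ψ p V)
          - star (PsiTilde0 ψ p V) ⬝ᵥ (Gm *ᵥ PsiT ψ p V) := by
      rw [show (inner (𝕜 := ℂ) (bE - aE) cE)
          = star (PsiT ψ p V - PsiTilde0 ψ p V) ⬝ᵥ (Gm *ᵥ PsiT ψ p V) from hinner _ _]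
      rw [star_sub, sub_dotProduct]
    rw [h1]
    unfold expval noCostBaseline
    simp [Complex.sub_re]
  have hCS : |(inner (𝕜 := ℂ) (bE - aE) cE).re| ≤ gmax * ‖bE - aE‖ := by
    have h1 : |(inner (𝕜 := ℂ) (bE - aE) cE).re| ≤ ‖(inner (𝕜 := ℂ) (bE - aE) cE)‖ :=
      Complex.abs_re_le_norm _
    have h2 : ‖(inner (𝕜 := ℂ) (bE - aE) cE)‖ ≤ ‖bE - aE‖ * ‖cE‖ := norm_inner_le_norm _ _
    have h3 : ‖bE - aE‖ * ‖cE‖ ≤ ‖bE - aE‖ * gmax :=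
      mul_le_mul_of_nonneg_left hcb (norm_nonneg _)
    calc |(inner (𝕜 := ℂ) (bE - aE) cE).re| ≤ ‖bE - aE‖ * ‖cE‖ := le_trans h1 h2
      _ ≤ ‖bE - aE‖ * gmax := h3
      _ = gmax * ‖bE - aE‖ := by ring
  rw [← hdiff] at hCS
  have h := abs_le.mp hCS
  constructor <;> [linarith [h.1, hsqrt] ; linarith [h.2, hsqrt]]
end
end
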